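/- Let X be a Banach space and let G : X → X be a bounded linear operator of positive type with constant κ > 0. Then for every u ∈ X one has the interpolation inequality ‖Gu‖ ≤ 2(κ+1) ‖G²u‖^{1/2} ‖u‖^{1/2}. -/

import Mathlib

open ContinuousLinearMap

/-- A bounded linear operator `G : X → X` is of positive type with constant `κ > 0`
if for every `β > 0` the operator `G + β•I` is bijective with a bounded inverse
of operator norm at most `κ/β`. -/
def IsPositiveType {X : Type*} [NormedAddCommGroup X] [NormedSpace ℝ X]
    (G : X →L[ℝ] X) (κ : ℝ) : Prop :=
  ∀ β : ℝ, 0 < β → ∃ B : X →L[ℝ] X,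
    B * (G + β • (1 : X →L[ℝ] X)) = 1 ∧ (G + β • (1 : X →L[ℝ] X)) * B = 1 ∧ ‖B‖ ≤ κ / β

lemma key_estimate {X : Type*} [NormedAddCommGroup X] [NormedSpace ℝ X]
    (G : X →L[ℝ] X) (κ : ℝ) (hκ : 0 < κ) (hG : ∀ β : ℝ, 0 < β → ∃ B : X →L[ℝ] X,
      B * (G + β • (1 : X →L[ℝ] X)) = 1 ∧ (G + β • (1 : X →L[ℝ] X)) * B = 1 ∧ ‖B‖ ≤ κ / β)
    (u : X) {β : ℝ} (hβ : 0 < β) :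
    ‖G u‖ ≤ (κ / β) * ‖G (G u)‖ + β * (κ + 1) * ‖u‖ := by
  obtain ⟨B, h1, h2, hBn⟩ := hG β hβ
  have hcentral : G * (β • (1 : X →L[ℝ] X)) = (β • (1 : X →L[ℝ] X)) * G := by
    simp [mul_smul_comm, smul_mul_assoc]
  have hswap : G * (G + β • (1 : X →L[ℝ] X)) = (G + β • (1 : X →L[ℝ] X)) * G := by
    rw [mul_add, add_mul, hcentral]
  have comm : B * G = G * B := by
    calc B * G = (B * G) * ((G + β • (1 : X →L[ℝ] X)) * B) := by rw [h2, mul_one]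
    _ = B * ((G * (G + β • (1 : X →L[ℝ] X))) * B) := by rw [mul_assoc, mul_assoc]
    _ = B * (((G + β • (1 : X →L[ℝ] X)) * G) * B) := by rw [hswap]
    _ = (B * (G + β • (1 : X →L[ℝ] X))) * (G * B) := by rw [mul_assoc, mul_assoc]
    _ = G * B := by rw [h1, one_mul]
  have hop : G = B * (G * G) + β • (G * B) := by
    calc G = (B * (G + β • (1 : X →L[ℝ] X))) * G := by rw [h1, one_mul]
    _ = B * (G * G) + β • (B * G) := by
        rw [mul_assoc, add_mul, mul_add]
        simp [smul_mul_assoc, mul_smul_comm]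
    _ = B * (G * G) + β • (G * B) := by rw [comm]
  have hGu : G u = B (G (G u)) + β • (G (B u)) := by
    have := DFunLike.congr_fun hop u
    simpa [mul_apply, add_apply, smul_apply] using this
  have hGBu : G (B u) = u - β • B u := by
    have := DFunLike.congr_fun h2 u
    simp only [ContinuousLinearMap.mul_apply, ContinuousLinearMap.add_apply, ContinuousLinearMap.smul_apply, ContinuousLinearMap.one_apply] at this
    rw [eq_sub_iff_add_eq]
    simpa using this
  have hBub : ‖B u‖ ≤ (κ / β) * ‖u‖ := le_trans (B.le_opNorm u) (by
    exact mul_le_mul_of_nonneg_right hBn (norm_nonneg u))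
  have hGBun : ‖G (B u)‖ ≤ (κ + 1) * ‖u‖ := by
    rw [hGBu]
    calc ‖u - β • B u‖ ≤ ‖u‖ + ‖β • B u‖ := norm_sub_le _ _
    _ = ‖u‖ + β * ‖B u‖ := by rw [norm_smul, Real.norm_of_nonneg hβ.le]
    _ ≤ ‖u‖ + β * ((κ / β) * ‖u‖) := by nlinarith [norm_nonneg (B u)]
    _ = (κ + 1) * ‖u‖ := by field_simp; ring
  have hBGG : ‖B (G (G u))‖ ≤ (κ / β) * ‖G (G u)‖ :=
    le_trans (B.le_opNorm _) (mul_le_mul_of_nonneg_right hBn (norm_nonneg _))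
  have h3 : ‖G u‖ ≤ ‖B (G (G u))‖ + β * ‖G (B u)‖ := by
    conv_lhs => rw [hGu]
    refine le_trans (norm_add_le _ _) ?_
    rw [norm_smul, Real.norm_of_nonneg hβ.le]
  nlinarith [norm_nonneg (G (B u))]


/-- Interpolation inequality (case `p = 1`, `q = 2`): for a positive type operator `G`
with constant `κ`, one has `‖Gu‖ ≤ 2(κ+1) ‖G²u‖^{1/2} ‖u‖^{1/2}` for all `u`. -/
theorem interpolation_inequality_of_positiveType
    {X : Type*} [NormedAddCommGroup X] [NormedSpace ℝ X] [CompleteSpace X]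
    (G : X →L[ℝ] X) (κ : ℝ) (hκ : 0 < κ) (hG : IsPositiveType G κ) (u : X) :
    ‖G u‖ ≤ 2 * (κ + 1) * ‖G (G u)‖ ^ ((1 : ℝ) / 2) * ‖u‖ ^ ((1 : ℝ) / 2) := by
  set a := ‖G (G u)‖ with ha
  set b := ‖u‖ with hb
  have ha0 : 0 ≤ a := norm_nonneg _
  have hb0 : 0 ≤ b := norm_nonneg _
  rcases eq_or_lt_of_le hb0 with hb' | hb'
  · have hu : u = 0 := norm_eq_zero.mp hb'.symm
    subst hu
    simp only [map_zero, norm_zero]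
    positivity
  rcases eq_or_lt_of_le ha0 with ha' | ha'
  · have h0 : ‖G u‖ ≤ 0 := by
      refine le_of_forall_pos_le_add fun ε hε => ?_
      have hβ : 0 < ε / ((κ + 1) * b) := by positivity
      have hk := key_estimate G κ hκ hG u hβ
      rw [← ha, ← hb, ← ha'] at hk
      have h2 : ε / ((κ + 1) * b) * (κ + 1) * b = ε := by field_simp
      linarith [hk, mul_pos hκ (by positivity : (0:ℝ) < ε / ((κ + 1) * b))]
    rw [le_antisymm h0 (norm_nonneg _)]
    positivity
  · have hβ : 0 < Real.sqrt (a / b) := Real.sqrt_pos.mpr (by positivity)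
    have key := key_estimate G κ hκ hG u hβ
    rw [← ha, ← hb] at key
    have hsq : Real.sqrt (a / b) * Real.sqrt (a / b) = a / b :=
      Real.mul_self_sqrt (by positivity)
    have h1 : Real.sqrt (a / b) * b = Real.sqrt (a * b) := by
      rw [show a * b = (a / b) * (b * b) by field_simp,
        Real.sqrt_mul (by positivity), Real.sqrt_mul_self hb0]
    have h2 : a / Real.sqrt (a / b) = Real.sqrt (a * b) := by
      rw [eq_comm, eq_div_iff hβ.ne']
      calc Real.sqrt (a * b) * Real.sqrt (a / b)
          = (Real.sqrt (a / b) * Real.sqrt (a / b)) * b := by rw [← h1]; ring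
      _ = a := by rw [hsq]; field_simp
    have e1 : (κ / Real.sqrt (a / b)) * a + Real.sqrt (a / b) * (κ + 1) * b
        = (2 * κ + 1) * Real.sqrt (a * b) := by
      rw [div_mul_eq_mul_div, mul_div_assoc, h2]
      rw [mul_comm (Real.sqrt (a/b)) (κ+1), mul_assoc, h1]
      ring
    have e2 : a ^ ((1:ℝ)/2) * b ^ ((1:ℝ)/2) = Real.sqrt (a * b) := by
      rw [← Real.sqrt_eq_rpow, ← Real.sqrt_eq_rpow, ← Real.sqrt_mul ha0]
    calc ‖G u‖ ≤ (κ / Real.sqrt (a / b)) * a + Real.sqrt (a / b) * (κ + 1) * b := key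
    _ = (2 * κ + 1) * Real.sqrt (a * b) := e1
    _ ≤ 2 * (κ + 1) * Real.sqrt (a * b) := by
        have := Real.sqrt_nonneg (a * b); nlinarith
    _ = 2 * (κ + 1) * a ^ ((1:ℝ)/2) * b ^ ((1:ℝ)/2) := by rw [mul_assoc, mul_assoc, ← e2, ← mul_assoc]
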